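/- Let A and B be event structures. For every order-isomorphism φ : C(A) ≅ C(B) (with configurations ordered by inclusion) there is a unique isomorphism of event structures φ̂ : A ≅ B satisfying φ̂(x) = φ(x) for every configuration x ∈ C(A); moreover this assignment is a bijective correspondence between order-isomorphisms C(A) ≅ C(B) and isomorphisms of event structures A ≅ B. -/

import Mathlib

/-- An event structure presented as raw data: a set of events, a causality
relation and a consistency predicate on (finite) sets of events. -/
structure ES where
  Evt : Type
  le : Evt → Evt → Prop
  Con : Set (Set Evt)

namespace ES

/-- Strict causality. -/
def lt (E : ES) (a b : E.Evt) : Prop := E.le a b ∧ a ≠ b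

/-- The axioms of event structures: `le` is a partial order, causes `[e]` are
finite, consistency is a nonempty collection of finite sets, closed under
subsets, containing all singletons, and closed under adding causal
dependencies. -/
def IsES (E : ES) : Prop :=
  (∀ e, E.le e e) ∧
  (∀ a b c, E.le a b → E.le b c → E.le a c) ∧
  (∀ a b, E.le a b → E.le b a → a = b) ∧
  (∀ e, {e' | E.le e' e}.Finite) ∧
  E.Con.Nonempty ∧
  (∀ X ∈ E.Con, X.Finite) ∧
  (∀ e, ({e} : Set E.Evt) ∈ E.Con) ∧
  (∀ X ∈ E.Con, ∀ Y, Y ⊆ X → Y ∈ E.Con) ∧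
  (∀ X ∈ E.Con, ∀ e ∈ X, ∀ e', E.le e' e → insert e' X ∈ E.Con)

/-- A (finite) configuration: a finite, consistent and down-closed set of events. -/
def Config (E : ES) (x : Set E.Evt) : Prop :=
  x.Finite ∧ (∀ Y, Y ⊆ x → Y.Finite → Y ∈ E.Con) ∧
  ∀ e ∈ x, ∀ e', E.le e' e → e' ∈ x

/-- Immediate causality `e ⇢ e'`. -/
def imc (E : ES) (a b : E.Evt) : Prop :=
  E.lt a b ∧ ∀ c, E.le a c → E.le c b → c = a ∨ c = b

/-- Simple parallel composition of event structures. -/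
def par (E F : ES) : ES where
  Evt := E.Evt ⊕ F.Evt
  le := fun p q =>
    match p, q with
    | Sum.inl a, Sum.inl b => E.le a b
    | Sum.inr a, Sum.inr b => F.le a b
    | _, _ => False
  Con := {X | Sum.inl ⁻¹' X ∈ E.Con ∧ Sum.inr ⁻¹' X ∈ F.Con}

/-- Projection (hiding): restrict an event structure to a subset `V` of events. -/
def proj (E : ES) (V : Set E.Evt) : ES where
  Evt := ↥V
  le := fun a b => E.le a.val b.val
  Con := {X | Subtype.val '' X ∈ E.Con}

end ES

/-- A (total) map of event structures: preserves configurations and is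
injective on each configuration. -/
def IsMap (E F : ES) (f : E.Evt → F.Evt) : Prop :=
  (∀ x, E.Config x → F.Config (f '' x)) ∧ ∀ x, E.Config x → Set.InjOn f x

/-- The poset of configurations of `E`, ordered by inclusion. -/
def ConfigPoset (E : ES) : Type := {x : Set E.Evt // E.Config x}

instance (E : ES) : PartialOrder (ConfigPoset E) :=
  Subtype.partialOrder _

/-- `f` is an isomorphism of event structures: a map of event structures with
a two-sided inverse map. -/
def IsESIso (A B : ES) (f : A.Evt → B.Evt) : Prop :=
  IsMap A B f ∧ ∃ g : B.Evt → A.Evt, IsMap B A g ∧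
    (∀ a, g (f a) = a) ∧ ∀ b, f (g b) = b

namespace ESLift

open Set

variable {E : ES}

/-- Down-closure of an event. -/
def dc (E : ES) (e : E.Evt) : Set E.Evt := {e' | E.le e' e}

/-- Strict down-closure of an event. -/
def dcs (E : ES) (e : E.Evt) : Set E.Evt := {e' | E.le e' e ∧ e' ≠ e}

lemma empty_con (hE : E.IsES) : (∅ : Set E.Evt) ∈ E.Con := by
  obtain ⟨X, hX⟩ := hE.2.2.2.2.1
  exact hE.2.2.2.2.2.2.2.1 X hX ∅ (Set.empty_subset X)

lemma config_empty (hE : E.IsES) : E.Config (∅ : Set E.Evt) := by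
  refine ⟨Set.finite_empty, ?_, by simp⟩
  intro Y hY _
  rw [Set.subset_empty_iff] at hY
  exact hY ▸ empty_con hE

lemma dc_con (hE : E.IsES) (e : E.Evt) : dc E e ∈ E.Con := by
  obtain ⟨hrefl, htrans, hanti, hfin, hne, hConfin, hsing, hsub, hadd⟩ := hE
  have key : ∀ S : Set E.Evt, S.Finite → S ⊆ dc E e → insert e S ∈ E.Con := by
    intro S hS
    refine Set.Finite.induction_on (motive := fun s _ => s ⊆ dc E e → insert e s ∈ E.Con) S hS (fun _ => by simpa using hsing e) ?_
    intro a s ha hs ih hsub'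
    have h1 : insert e s ∈ E.Con := ih (fun c hc => hsub' (Set.mem_insert_of_mem a hc))
    have h2 : insert a (insert e s) ∈ E.Con :=
      hadd _ h1 e (Set.mem_insert e s) a (hsub' (Set.mem_insert a s))
    rwa [Set.insert_comm]
  have h := key (dc E e) (hfin e) subset_rfl
  exact hsub _ h (dc E e) (Set.subset_insert e _)

lemma config_dc (hE : E.IsES) (e : E.Evt) : E.Config (dc E e) := by
  refine ⟨hE.2.2.2.1 e, fun Y hY _ => hE.2.2.2.2.2.2.2.1 _ (dc_con hE e) Y hY, ?_⟩
  intro c hc c' hc'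
  exact hE.2.1 c' c e hc' hc

lemma config_subset {x y : Set E.Evt} (hx : E.Config x) (hyx : y ⊆ x)
    (hdown : ∀ e ∈ y, ∀ e', E.le e' e → e' ∈ y) : E.Config y :=
  ⟨hx.1.subset hyx, fun Y hY hYf => hx.2.1 Y (hY.trans hyx) hYf, hdown⟩

lemma dcs_subset_dc (e : E.Evt) : dcs E e ⊆ dc E e := fun _ h => h.1

lemma config_dcs (hE : E.IsES) (e : E.Evt) : E.Config (dcs E e) := by
  refine config_subset (config_dc hE e) (dcs_subset_dc e) ?_
  rintro c ⟨hc, hcne⟩ c' hc'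
  refine ⟨hE.2.1 c' c e hc' hc, ?_⟩
  intro h
  exact hcne (hE.2.2.1 c e hc (h ▸ hc'))

lemma config_inter {x y : Set E.Evt} (hx : E.Config x) (hy : E.Config y) :
    E.Config (x ∩ y) := by
  refine ⟨hx.1.subset Set.inter_subset_left,
    fun Y hY hYf => hx.2.1 Y (hY.trans Set.inter_subset_left) hYf, ?_⟩
  rintro c ⟨hc1, hc2⟩ c' hc'
  exact ⟨hx.2.2 c hc1 c' hc', hy.2.2 c hc2 c' hc'⟩

lemma exists_max (hE : E.IsES) {S : Set E.Evt} (hS : S.Finite) (hne : S.Nonempty) :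
    ∃ m ∈ S, ∀ a ∈ S, E.le m a → a = m := by
  letI : PartialOrder E.Evt :=
    { le := E.le
      le_refl := hE.1
      le_trans := hE.2.1
      le_antisymm := hE.2.2.1 }
  obtain ⟨m, hm, h⟩ := Set.Finite.exists_maximalFor id S hS hne
  exact ⟨m, hm, fun a ha hle => hE.2.2.1 a m (h ha hle) hle⟩

lemma remove_max (hE : E.IsES) {x y : Set E.Evt} (hx : E.Config x) (hy : E.Config y)
    (hxy : x ⊆ y) (hne : x ≠ y) :
    ∃ e ∈ y, e ∉ x ∧ E.Config (y \ {e}) ∧ x ⊆ y \ {e} := by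
  have hd : (y \ x).Nonempty := by
    rw [Set.diff_nonempty]
    exact fun h => hne (Set.Subset.antisymm hxy h)
  obtain ⟨m, hm, hmax⟩ := exists_max hE (hy.1.diff (t := x)) hd
  refine ⟨m, hm.1, hm.2, ?_, fun a ha => ⟨hxy ha, fun h => hm.2 ((Set.mem_singleton_iff.mp h) ▸ ha)⟩⟩
  refine config_subset hy Set.diff_subset ?_
  rintro c ⟨hc, hcm⟩ c' hc'
  refine ⟨hy.2.2 c hc c' hc', ?_⟩
  intro hcm'
  rw [Set.mem_singleton_iff] at hcm hcm'
  subst hcm'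
  by_cases hcx : c ∈ x
  · exact hm.2 (hx.2.2 c hcx c' hc')
  · exact hcm (hmax c ⟨hc, hcx⟩ hc')

lemma cp_le {x y : ConfigPoset E} : x ≤ y ↔ x.val ⊆ y.val := Iff.rfl

end ESLift

namespace ESLift

open Set

variable {A B : ES}

/-- The down-closure of an event as a configuration. -/
def dcP (hA : A.IsES) (a : A.Evt) : ConfigPoset A := ⟨dc A a, config_dc hA a⟩

/-- The strict down-closure of an event as a configuration. -/
def dcsP (hA : A.IsES) (a : A.Evt) : ConfigPoset A := ⟨dcs A a, config_dcs hA a⟩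

lemma dcsP_le_dcP (hA : A.IsES) (a : A.Evt) : dcsP hA a ≤ dcP hA a :=
  cp_le.mpr (dcs_subset_dc a)

lemma dcsP_ne_dcP (hA : A.IsES) (a : A.Evt) : dcsP hA a ≠ dcP hA a := by
  intro h
  have h2 : dcs A a = dc A a := congrArg Subtype.val h
  have : a ∈ dcs A a := h2 ▸ (hA.1 a : a ∈ dc A a)
  exact this.2 rfl

lemma lift_exists (hA : A.IsES) (hB : B.IsES) (φ : ConfigPoset A ≃o ConfigPoset B)
    (a : A.Evt) : ((φ (dcP hA a)).val \ (φ (dcsP hA a)).val).Nonempty := by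
  rw [Set.diff_nonempty]
  intro h
  have h1 : φ (dcP hA a) ≤ φ (dcsP hA a) := cp_le.mpr h
  have h2 : φ (dcP hA a) = φ (dcsP hA a) :=
    le_antisymm h1 (φ.monotone (dcsP_le_dcP hA a))
  exact dcsP_ne_dcP hA a (φ.injective h2.symm)

/-- The lift of an order isomorphism of configuration posets to events. -/
noncomputable def liftF (hA : A.IsES) (hB : B.IsES)
    (φ : ConfigPoset A ≃o ConfigPoset B) (a : A.Evt) : B.Evt :=
  (lift_exists hA hB φ a).some

lemma lift_mem (hA : A.IsES) (hB : B.IsES) (φ : ConfigPoset A ≃o ConfigPoset B)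
    (a : A.Evt) : liftF hA hB φ a ∈ (φ (dcP hA a)).val :=
  (lift_exists hA hB φ a).some_mem.1

lemma lift_nmem (hA : A.IsES) (hB : B.IsES) (φ : ConfigPoset A ≃o ConfigPoset B)
    (a : A.Evt) : liftF hA hB φ a ∉ (φ (dcsP hA a)).val :=
  (lift_exists hA hB φ a).some_mem.2

/-- The image under `φ` of an intersection is contained in the image of any
configuration containing the intersection. -/
lemma inter_sub (hB : B.IsES) (φ : ConfigPoset A ≃o ConfigPoset B)
    (u v : ConfigPoset A) {t : ConfigPoset A} (h : u.val ∩ v.val ⊆ t.val) :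
    (φ u).val ∩ (φ v).val ⊆ (φ t).val := by
  set w : ConfigPoset B := ⟨(φ u).val ∩ (φ v).val, config_inter (φ u).2 (φ v).2⟩ with hw
  have h1 : φ.symm w ≤ u := by
    have : w ≤ φ u := cp_le.mpr Set.inter_subset_left
    simpa using φ.symm.monotone this
  have h2 : φ.symm w ≤ v := by
    have : w ≤ φ v := cp_le.mpr Set.inter_subset_right
    simpa using φ.symm.monotone this
  have h3 : φ.symm w ≤ t := cp_le.mpr ((Set.subset_inter (cp_le.mp h1) (cp_le.mp h2)).trans h)
  have h4 : w ≤ φ t := by simpa using φ.monotone h3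
  exact cp_le.mp h4

lemma lift_inj (hA : A.IsES) (hB : B.IsES) (φ : ConfigPoset A ≃o ConfigPoset B) :
    Function.Injective (liftF hA hB φ) := by
  intro a a' hff
  by_contra hne
  by_cases h1 : A.le a a'
  · have hsub : dc A a ⊆ dcs A a' := fun c hc =>
      ⟨hA.2.1 c a a' hc h1, fun hc' => hne (hA.2.2.1 a a' h1 (hc' ▸ hc))⟩
    have := φ.monotone (cp_le.mpr hsub : dcP hA a ≤ dcsP hA a')
    exact lift_nmem hA hB φ a' (hff ▸ cp_le.mp this (lift_mem hA hB φ a))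
  · by_cases h2 : A.le a' a
    · have hsub : dc A a' ⊆ dcs A a := fun c hc =>
        ⟨hA.2.1 c a' a hc h2, fun hc' => hne ((hA.2.2.1 a a' (hc' ▸ hc) h2).symm ▸ rfl)⟩
      have := φ.monotone (cp_le.mpr hsub : dcP hA a' ≤ dcsP hA a)
      exact lift_nmem hA hB φ a (hff ▸ cp_le.mp this (lift_mem hA hB φ a'))
    · have hsub : dc A a ∩ dc A a' ⊆ dcs A a := by
        rintro c ⟨hc1, hc2⟩
        exact ⟨hc1, fun he => h1 (he ▸ hc2)⟩
      have h3 := inter_sub hB φ (dcP hA a) (dcP hA a') (t := dcsP hA a) hsub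
      exact lift_nmem hA hB φ a
        (h3 ⟨lift_mem hA hB φ a, hff ▸ lift_mem hA hB φ a'⟩)

end ESLift

namespace ESLift

open Set

variable {A B : ES}

lemma lift_image_empty (hA : A.IsES) (hB : B.IsES) (φ : ConfigPoset A ≃o ConfigPoset B)
    (x : ConfigPoset A) (hxe : x.val = ∅) : liftF hA hB φ '' x.val = (φ x).val := by
  have hφ : (φ x).val ⊆ ∅ := by
    have h1 : x ≤ φ.symm ⟨∅, config_empty hB⟩ := cp_le.mpr (by rw [hxe]; exact Set.empty_subset _)
    have h2 := φ.monotone h1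
    have h4 : (φ (φ.symm ⟨∅, config_empty hB⟩)).val = ∅ :=
      congrArg Subtype.val (φ.apply_symm_apply _)
    exact (cp_le.mp h2).trans h4.subset
  rw [hxe, Set.image_empty]
  exact (Set.subset_empty_iff.mp hφ).symm

lemma lift_image (hA : A.IsES) (hB : B.IsES) (φ : ConfigPoset A ≃o ConfigPoset B)
    (x : ConfigPoset A) : liftF hA hB φ '' x.val = (φ x).val := by
  set f := liftF hA hB φ with hf
  suffices h : ∀ n (x : ConfigPoset A), x.val.ncard ≤ n → f '' x.val = (φ x).val by
    exact h x.val.ncard x le_rfl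
  intro n
  induction n with
  | zero =>
    intro x hx
    exact lift_image_empty hA hB φ x (Set.ncard_eq_zero x.2.1 |>.mp (Nat.le_zero.mp hx))
  | succ n ih =>
    intro x hx
    rcases Set.eq_empty_or_nonempty x.val with hxe | hxne
    · exact lift_image_empty hA hB φ x hxe
    obtain ⟨e, he, hmax⟩ := exists_max hA x.2.1 hxne
    have hx' : A.Config (x.val \ {e}) := by
      refine config_subset x.2 Set.diff_subset ?_
      rintro c ⟨hc, hcm⟩ c' hc'
      refine ⟨x.2.2.2 c hc c' hc', ?_⟩
      intro hcm'
      rw [Set.mem_singleton_iff] at hcm hcm'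
      subst hcm'
      exact hcm (hmax c hc hc')
    set x'P : ConfigPoset A := ⟨x.val \ {e}, hx'⟩ with hx'P
    have hcard : x'P.val.ncard ≤ n := by
      show (x.val \ {e}).ncard ≤ n
      have := Set.ncard_diff_singleton_lt_of_mem he x.2.1
      omega
    have IH := ih x'P hcard
    have hsubx : x'P ≤ x := cp_le.mpr Set.diff_subset
    have hne2 : φ x'P ≠ φ x := by
      intro h
      have h2 : x'P.val = x.val := congrArg Subtype.val (φ.injective h)
      have : e ∈ x'P.val := h2 ▸ he
      exact this.2 rfl
    -- obtain the unique extra element d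
    obtain ⟨d, hd, hdn, hz, hz2⟩ := remove_max hB (φ x'P).2 (φ x).2
      (cp_le.mp (φ.monotone hsubx)) (fun h => hne2 (Subtype.ext h))
    set zP : ConfigPoset B := ⟨(φ x).val \ {d}, hz⟩ with hzP
    -- (φ x).val \ {d} = (φ x'P).val
    have hkey : (φ x).val \ {d} = (φ x'P).val := by
      have hw1 : x'P ≤ φ.symm zP := by
        have : φ x'P ≤ zP := cp_le.mpr hz2
        simpa using φ.symm.monotone this
      have hw2 : φ.symm zP ≤ x := by
        have : zP ≤ φ x := cp_le.mpr Set.diff_subset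
        simpa using φ.symm.monotone this
      have hew : e ∉ (φ.symm zP).val := by
        intro hew
        have hxw : x.val ⊆ (φ.symm zP).val := by
          intro c hc
          by_cases hce : c = e
          · exact hce ▸ hew
          · exact cp_le.mp hw1 ⟨hc, hce⟩
        have : φ.symm zP = x := le_antisymm hw2 (cp_le.mpr hxw)
        have h2 : zP = φ x := by rw [← this, φ.apply_symm_apply]
        replace h2 := congrArg Subtype.val h2
        rw [← h2] at hd
        exact hd.2 rfl
      have hwx' : φ.symm zP = x'P := by
        refine le_antisymm (cp_le.mpr ?_) hw1
        intro c hc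
        refine ⟨cp_le.mp hw2 hc, fun hce => hew ((Set.mem_singleton_iff.mp hce) ▸ hc)⟩
      have : zP = φ x'P := by rw [← hwx', φ.apply_symm_apply]
      exact congrArg Subtype.val this
    -- f e = d
    have hdcx : dcP hA e ≤ x := cp_le.mpr (fun c hc => x.2.2.2 e he c hc)
    have hfex : f e ∈ (φ x).val := cp_le.mp (φ.monotone hdcx) (lift_mem hA hB φ e)
    have hfed : f e = d := by
      by_contra hfed
      have hfe' : f e ∈ (φ x'P).val := hkey ▸ ⟨hfex, hfed⟩
      have hsub2 : x'P.val ∩ (dcP hA e).val ⊆ (dcsP hA e).val := by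
        rintro c ⟨hc1, hc2⟩
        exact ⟨hc2, fun hce => hc1.2 (hce ▸ rfl)⟩
      have h3 := inter_sub hB φ x'P (dcP hA e) (t := dcsP hA e) hsub2
      exact lift_nmem hA hB φ e (h3 ⟨hfe', lift_mem hA hB φ e⟩)
    -- conclude
    have himg : f '' x.val = insert (f e) (f '' x'P.val) := by
      have hxval : x.val = insert e x'P.val := by
        rw [hx'P]
        rw [Set.insert_diff_singleton, Set.insert_eq_self.mpr he]
      rw [hxval, Set.image_insert_eq]
    rw [himg, IH, hfed]
    rw [← hkey, Set.insert_diff_singleton, Set.insert_eq_self.mpr hd]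

end ESLift

namespace ESLift

open Set

variable {A B : ES}

lemma lift_left_inv (hA : A.IsES) (hB : B.IsES) (φ : ConfigPoset A ≃o ConfigPoset B)
    (a : A.Evt) : liftF hB hA φ.symm (liftF hA hB φ a) = a := by
  have h1 : liftF hB hA φ.symm '' (liftF hA hB φ '' ((dcP hA a).val)) = (dcP hA a).val := by
    rw [lift_image hA hB φ (dcP hA a)]
    rw [lift_image hB hA φ.symm (φ (dcP hA a))]
    rw [φ.symm_apply_apply]
  have h2 : liftF hB hA φ.symm '' (liftF hA hB φ '' ((dcsP hA a).val)) = (dcsP hA a).val := by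
    rw [lift_image hA hB φ (dcsP hA a)]
    rw [lift_image hB hA φ.symm (φ (dcsP hA a))]
    rw [φ.symm_apply_apply]
  have hmem : liftF hB hA φ.symm (liftF hA hB φ a) ∈ dc A a := by
    have : liftF hB hA φ.symm (liftF hA hB φ a) ∈ (dcP hA a).val := by
      rw [← h1]
      exact Set.mem_image_of_mem _ (Set.mem_image_of_mem _ (hA.1 a : a ∈ dc A a))
    exact this
  by_contra hne
  have hmem2 : liftF hB hA φ.symm (liftF hA hB φ a) ∈ (dcsP hA a).val := ⟨hmem, hne⟩
  rw [← h2] at hmem2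
  obtain ⟨b, ⟨c, hc, rfl⟩, hgb⟩ := hmem2
  have h3 : liftF hA hB φ c = liftF hA hB φ a := lift_inj hB hA φ.symm hgb
  have h4 : c = a := lift_inj hA hB φ h3
  exact hc.2 h4

lemma lift_isIso (hA : A.IsES) (hB : B.IsES) (φ : ConfigPoset A ≃o ConfigPoset B) :
    IsESIso A B (liftF hA hB φ) := by
  have hmapf : IsMap A B (liftF hA hB φ) := by
    constructor
    · intro x hx
      rw [lift_image hA hB φ ⟨x, hx⟩]
      exact (φ ⟨x, hx⟩).2
    · intro x _ a _ b _ h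
      exact lift_inj hA hB φ h
  have hmapg : IsMap B A (liftF hB hA φ.symm) := by
    constructor
    · intro y hy
      rw [lift_image hB hA φ.symm ⟨y, hy⟩]
      exact (φ.symm ⟨y, hy⟩).2
    · intro y _ a _ b _ h
      exact lift_inj hB hA φ.symm h
  refine ⟨hmapf, liftF hB hA φ.symm, hmapg, lift_left_inv hA hB φ, ?_⟩
  have := lift_left_inv hB hA φ.symm
  simpa using this

lemma lift_unique (hA : A.IsES) (hB : B.IsES) (φ : ConfigPoset A ≃o ConfigPoset B)
    {f' : A.Evt → B.Evt} (hiso : IsESIso A B f')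
    (himg : ∀ x : ConfigPoset A, f' '' x.val = (φ x).val) : f' = liftF hA hB φ := by
  funext a
  have h1 : f' a ∈ (φ (dcP hA a)).val := by
    rw [← himg (dcP hA a)]
    exact Set.mem_image_of_mem f' (hA.1 a : a ∈ dc A a)
  have h2 : f' a ∉ (φ (dcsP hA a)).val := by
    intro hmem
    rw [← himg (dcsP hA a)] at hmem
    obtain ⟨c, hc, hfc⟩ := hmem
    have hinj := hiso.1.2 (dc A a) (config_dc hA a)
    have : c = a := hinj (hc.1 : c ∈ dc A a) (hA.1 a : a ∈ dc A a) hfc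
    exact hc.2 this
  have hsplit : dc A a = insert a (dcs A a) := by
    ext c
    constructor
    · intro hc
      by_cases hca : c = a
      · exact Or.inl hca
      · exact Or.inr ⟨hc, hca⟩
    · rintro (rfl | hc)
      · exact hA.1 _
      · exact hc.1
  have h3 : (φ (dcP hA a)).val = insert (liftF hA hB φ a) ((φ (dcsP hA a)).val) := by
    rw [← lift_image hA hB φ (dcP hA a), ← lift_image hA hB φ (dcsP hA a)]
    show liftF hA hB φ '' (dc A a) = insert (liftF hA hB φ a) (liftF hA hB φ '' (dcs A a))
    rw [hsplit, Set.image_insert_eq]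
  rw [h3] at h1
  rcases h1 with h | h
  · exact h
  · exact absurd h h2

end ESLift

/-- every order-isomorphism `C(A) ≅ C(B)` lifts to a unique
isomorphism of event structures acting accordingly on configurations, and this
is a bijective correspondence between order-isomorphisms `C(A) ≅ C(B)` and
isomorphisms of event structures `A ≅ B`. -/
theorem order_iso_of_configs_lifts_uniquely
    (A B : ES) (hA : A.IsES) (hB : B.IsES) :
    (∀ φ : ConfigPoset A ≃o ConfigPoset B,
      ∃! f : {f : A.Evt → B.Evt // IsESIso A B f},
        ∀ x : ConfigPoset A, f.val '' x.val = (φ x).val) ∧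
    ∃ e : (ConfigPoset A ≃o ConfigPoset B) ≃ {f : A.Evt → B.Evt // IsESIso A B f},
      ∀ (φ : ConfigPoset A ≃o ConfigPoset B) (x : ConfigPoset A),
        (e φ).val '' x.val = (φ x).val := by
  constructor
  · intro φ
    refine ⟨⟨ESLift.liftF hA hB φ, ESLift.lift_isIso hA hB φ⟩,
      fun x => ESLift.lift_image hA hB φ x, ?_⟩
    rintro ⟨f', hiso⟩ h
    exact Subtype.ext (ESLift.lift_unique hA hB φ hiso h)
  · refine ⟨Equiv.ofBijective
      (fun φ => ⟨ESLift.liftF hA hB φ, ESLift.lift_isIso hA hB φ⟩) ⟨?_, ?_⟩,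
      fun φ x => ESLift.lift_image hA hB φ x⟩
    · intro φ ψ h
      have hval : ESLift.liftF hA hB φ = ESLift.liftF hA hB ψ := congrArg Subtype.val h
      apply DFunLike.ext
      intro x
      apply Subtype.ext
      rw [← ESLift.lift_image hA hB φ x, ← ESLift.lift_image hA hB ψ x, hval]
    · rintro ⟨f, hf⟩
      obtain ⟨g, hg, hgf, hfg⟩ := hf.2
      let eqv : ConfigPoset A ≃ ConfigPoset B :=
        { toFun := fun x => ⟨f '' x.val, hf.1.1 x.val x.2⟩
          invFun := fun y => ⟨g '' y.val, hg.1 y.val y.2⟩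
          left_inv := fun x => Subtype.ext (by
            simp only [Set.image_image, hgf, Set.image_id'])
          right_inv := fun y => Subtype.ext (by
            simp only [Set.image_image, hfg, Set.image_id']) }
      let ψ : ConfigPoset A ≃o ConfigPoset B :=
        { toEquiv := eqv
          map_rel_iff' := by
            intro x y
            constructor
            · intro h
              have h' : f '' x.val ⊆ f '' y.val := h
              have h2 : g '' (f '' x.val) ⊆ g '' (f '' y.val) := Set.image_mono (f := g) h'
              rw [Set.image_image, Set.image_image] at h2
              simp only [hgf, Set.image_id'] at h2
              exact ESLift.cp_le.mpr h2
            · intro h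
              exact ESLift.cp_le.mpr (Set.image_mono (f := f) (ESLift.cp_le.mp h)) }
      refine ⟨ψ, ?_⟩
      apply Subtype.ext
      exact (ESLift.lift_unique hA hB ψ hf (fun x => rfl)).symm
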